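/- Let L_D be a Lindblad generator such that the set of states supported on H_0 is globally asymptotically stable, and let H_0 = span{|Ψ⟩} ⊕ H_w. If H' is a subspace with H' ⊥ H_w and D(H') invariant under the semigroup, then every trajectory starting in D(H') converges to ρ_d = |Ψ⟩⟨Ψ|. -/

import Mathlib

open Matrix Filter
open scoped ComplexOrder

/-- if the set of states supported on `H_0 = span{|Ψ⟩} ⊕ H_w` is GAS for
the semigroup, `H'` is a subspace orthogonal to `H_w` containing `|Ψ⟩` whose density
operators form an invariant set, then every trajectory starting in `D(H')` converges to
`ρ_d = |Ψ⟩⟨Ψ|`. -/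
theorem stmt_15 {d : ℕ}
    (T : ℝ → (Matrix (Fin d) (Fin d) ℂ →ₗ[ℂ] Matrix (Fin d) (Fin d) ℂ))
    (hT0 : T 0 = LinearMap.id)
    (hTsemi : ∀ s t : ℝ, 0 ≤ s → 0 ≤ t → T (s + t) = (T s).comp (T t))
    (htr : ∀ (t : ℝ) (ρ : Matrix (Fin d) (Fin d) ℂ), 0 ≤ t → (T t ρ).trace = ρ.trace)
    (hpos : ∀ (t : ℝ) (ρ : Matrix (Fin d) (Fin d) ℂ), 0 ≤ t → ρ.PosSemidef →
      (T t ρ).PosSemidef)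
    (ψ : Fin d → ℂ) (hψ : dotProduct (star ψ) ψ = 1)
    (H0 Hw H' : Submodule ℂ (Fin d → ℂ))
    (hdecomp : H0 = (Submodule.span ℂ {ψ}) ⊔ Hw)
    (hdisj : (Submodule.span ℂ ({ψ} : Set (Fin d → ℂ))) ⊓ Hw = ⊥)
    (horthw : ∀ w ∈ Hw, dotProduct (star ψ) w = 0)
    (hGAS : ∀ ρ : Matrix (Fin d) (Fin d) ℂ, ρ.PosSemidef → ρ.trace = 1 →
      ∃ σ : Matrix (Fin d) (Fin d) ℂ, σ.PosSemidef ∧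
        LinearMap.range σ.mulVecLin ≤ H0 ∧
        Tendsto (fun t : ℝ => T t ρ) atTop (nhds σ))
    (hψH' : ψ ∈ H')
    (hperp : ∀ u ∈ H', ∀ w ∈ Hw, dotProduct (star u) w = 0)
    (hinv : ∀ (t : ℝ) (ρ : Matrix (Fin d) (Fin d) ℂ), 0 ≤ t → ρ.PosSemidef →
      LinearMap.range ρ.mulVecLin ≤ H' → LinearMap.range (T t ρ).mulVecLin ≤ H') :
    ∀ ρ : Matrix (Fin d) (Fin d) ℂ, ρ.PosSemidef → ρ.trace = 1 →
      LinearMap.range ρ.mulVecLin ≤ H' →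
      Tendsto (fun t : ℝ => T t ρ) atTop (nhds (vecMulVec ψ (star ψ))) := by
  intro ρ hρpos hρtr hρran
  obtain ⟨σ, hσpos, hσH0, hσlim⟩ := hGAS ρ hρpos hρtr
  -- trace of σ is 1
  have hσtr : σ.trace = 1 := by
    have h1 : Tendsto (fun t : ℝ => (T t ρ).trace) atTop (nhds σ.trace) :=
      (Continuous.matrix_trace continuous_id).tendsto σ |>.comp hσlim
    have h2 : Tendsto (fun t : ℝ => (T t ρ).trace) atTop (nhds 1) := by
      apply Tendsto.congr' _ tendsto_const_nhds
      filter_upwards [eventually_ge_atTop (0 : ℝ)] with t ht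
      rw [htr t ρ ht, hρtr]
    exact tendsto_nhds_unique h1 h2
  -- range of σ is in H'
  have hσH' : LinearMap.range σ.mulVecLin ≤ H' := by
    rintro _ ⟨v, rfl⟩
    have hcl : IsClosed (H' : Set (Fin d → ℂ)) :=
      Submodule.closed_of_finiteDimensional H'
    have hlim : Tendsto (fun t : ℝ => (T t ρ).mulVec v) atTop (nhds (σ.mulVec v)) :=
      ((continuous_id.matrix_mulVec continuous_const).tendsto σ).comp hσlim
    refine hcl.mem_of_tendsto hlim ?_
    filter_upwards [eventually_ge_atTop (0 : ℝ)] with t ht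
    exact hinv t ρ ht hρpos hρran ⟨v, rfl⟩
  -- range of σ is in span {ψ}
  have hspan : LinearMap.range σ.mulVecLin ≤ Submodule.span ℂ {ψ} := by
    intro x hx
    have hx0 : x ∈ H0 := hσH0 hx
    have hx' : x ∈ H' := hσH' hx
    rw [hdecomp, Submodule.mem_sup] at hx0
    obtain ⟨y, hy, z, hz, rfl⟩ := hx0
    obtain ⟨a, rfl⟩ := Submodule.mem_span_singleton.mp hy
    have h1 : dotProduct (star (a • ψ + z)) z = 0 := hperp _ hx' z hz
    have h2 : dotProduct (star (a • ψ)) z = 0 := by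
      have : star (a • ψ) = (star a) • (star ψ) := by
        ext i; simp [mul_comm]
      rw [this, smul_dotProduct, horthw z hz, smul_zero]
    have h3 : dotProduct (star z) z = 0 := by
      have := h1
      rw [star_add, add_dotProduct, h2, zero_add] at this
      exact this
    have hz0 : z = 0 := dotProduct_star_self_eq_zero.mp h3
    rw [hz0, add_zero]
    exact Submodule.smul_mem _ _ (Submodule.mem_span_singleton_self ψ)
  -- columns of σ are multiples of ψ
  have hcol : ∀ j, ∃ c : ℂ, (fun i => σ i j) = c • ψ := by
    intro j
    have : σ.mulVec (Pi.single j 1) ∈ Submodule.span ℂ {ψ} :=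
      hspan ⟨Pi.single j 1, rfl⟩
    obtain ⟨c, hc⟩ := Submodule.mem_span_singleton.mp this
    refine ⟨c, ?_⟩
    rw [hc]
    ext i
    simp [Matrix.mulVec_single]
  choose c hc using hcol
  have hcij : ∀ i j, σ i j = c j * ψ i := by
    intro i j
    have := congr_fun (hc j) i
    simpa [mul_comm] using this
  -- trace gives ∑ c i * ψ i = 1
  have hsum : ∑ i, c i * ψ i = 1 := by
    rw [← hσtr, Matrix.trace]
    exact Finset.sum_congr rfl fun i _ => (hcij i i).symm
  -- Hermitian
  have hherm := hσpos.isHermitian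
  -- c j = star (ψ j)
  have hcval : ∀ j, c j = star (ψ j) := by
    intro j
    have hψsum : ∑ i, star (ψ i) * ψ i = 1 := by
      simpa [dotProduct] using hψ
    calc c j = ∑ i, star (ψ i) * σ i j := by
          rw [Finset.sum_congr rfl fun i _ => by rw [hcij i j]]
          rw [show ∑ i, star (ψ i) * (c j * ψ i) = c j * ∑ i, star (ψ i) * ψ i by
            rw [Finset.mul_sum]; exact Finset.sum_congr rfl fun i _ => by ring]
          rw [hψsum, mul_one]
      _ = ∑ i, star (ψ i) * star (σ j i) := by
          refine Finset.sum_congr rfl fun i _ => ?_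
          congr 1
          have := congr_fun (congr_fun hherm.symm i) j
          simpa [Matrix.conjTranspose_apply] using this
      _ = star (∑ i, σ j i * ψ i) := by
          rw [star_sum]
          exact Finset.sum_congr rfl fun i _ => by rw [star_mul', mul_comm]
      _ = star (ψ j) := by
          congr 1
          calc ∑ i, σ j i * ψ i = ∑ i, c i * ψ i * ψ j := by
                refine Finset.sum_congr rfl fun i _ => ?_
                rw [hcij j i]; ring
            _ = (∑ i, c i * ψ i) * ψ j := by rw [Finset.sum_mul]
            _ = ψ j := by rw [hsum, one_mul]
  -- conclude σ = vecMulVec ψ (star ψ)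
  have hσeq : σ = vecMulVec ψ (star ψ) := by
    ext i j
    rw [hcij i j, hcval j, Matrix.vecMulVec_apply]
    simp [mul_comm]
  rw [← hσeq]
  exact hσlim
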